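/- arXiv:1404.7637 — 3 statements merged into one kernel-verified Lean document; each statement's English description precedes it below -/
import Mathlib

section
/- If ρ is a symmetric probability measure on ℝ whose support contains at least five points, and all moments up to order 8 are finite, then (μ_4 - σ^4)(μ_8 - μ_4^2) ≠ (μ_6 - σ^2 μ_4)^2, where σ^2, μ_4, μ_6, μ_8 denote the second, fourth, sixth and eighth moments of ρ. -/
open MeasureTheory

/-- The (topological) support of a measure: points all of whose neighbourhoods have
positive measure. -/
def measSupport (ρ : Measure ℝ) : Set ℝ := {x | ∀ U ∈ nhds x, 0 < ρ U}

lemma vanish_on_support (ρ : Measure ℝ) {g : ℝ → ℝ} (hg : Continuous g)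
    (hnn : ∀ x, 0 ≤ g x) (hint : Integrable g ρ) (hzero : ∫ x, g x ∂ρ = 0) :
    ∀ x ∈ measSupport ρ, g x = 0 := by
  have hae : g =ᵐ[ρ] 0 :=
    (integral_eq_zero_iff_of_nonneg (fun x => hnn x) hint).mp hzero
  intro x hx
  by_contra h
  have hopen : IsOpen {y : ℝ | g y ≠ 0} := isOpen_compl_iff.mpr isClosed_singleton |>.preimage hg
  have hmem : {y : ℝ | g y ≠ 0} ∈ nhds x := hopen.mem_nhds h
  have hpos := hx _ hmem
  have : ρ {y : ℝ | g y ≠ 0} = 0 := by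
    have := hae
    rw [Filter.EventuallyEq, ae_iff] at this
    simpa using this
  simp [this] at hpos


lemma int_quartic_sq (ρ : Measure ℝ) [IsProbabilityMeasure ρ]
    (h2 : Integrable (fun x : ℝ => x ^ 2) ρ)
    (h4 : Integrable (fun x : ℝ => x ^ 4) ρ)
    (h6 : Integrable (fun x : ℝ => x ^ 6) ρ)
    (h8 : Integrable (fun x : ℝ => x ^ 8) ρ) (a b : ℝ) :
    ∫ x, (x ^ 4 + a * x ^ 2 + b) ^ 2 ∂ρ =
      (∫ x, x ^ 8 ∂ρ) + 2 * a * (∫ x, x ^ 6 ∂ρ) + (a ^ 2 + 2 * b) * (∫ x, x ^ 4 ∂ρ)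
        + 2 * a * b * (∫ x, x ^ 2 ∂ρ) + b ^ 2 := by
  have i6 := h6.const_mul (2 * a)
  have i4 := h4.const_mul (a ^ 2 + 2 * b)
  have i2 := h2.const_mul (2 * a * b)
  have e : (fun x : ℝ => (x ^ 4 + a * x ^ 2 + b) ^ 2)
      = fun x : ℝ => (((x ^ 8 + (2 * a) * x ^ 6) + (a ^ 2 + 2 * b) * x ^ 4)
          + (2 * a * b) * x ^ 2) + b ^ 2 := by
    funext x; ring
  calc ∫ x, (x ^ 4 + a * x ^ 2 + b) ^ 2 ∂ρ
      = ∫ x, (((x ^ 8 + (2 * a) * x ^ 6) + (a ^ 2 + 2 * b) * x ^ 4)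
          + (2 * a * b) * x ^ 2) + b ^ 2 ∂ρ := by rw [e]
    _ = (∫ x, ((x ^ 8 + (2 * a) * x ^ 6) + (a ^ 2 + 2 * b) * x ^ 4)
          + (2 * a * b) * x ^ 2 ∂ρ) + ∫ _x, (b ^ 2 : ℝ) ∂ρ :=
        integral_add (((h8.add i6).add i4).add i2) (integrable_const _)
    _ = ((∫ x, (x ^ 8 + (2 * a) * x ^ 6) + (a ^ 2 + 2 * b) * x ^ 4 ∂ρ)
          + ∫ x, (2 * a * b) * x ^ 2 ∂ρ) + ∫ _x, (b ^ 2 : ℝ) ∂ρ := by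
        congr 1; exact integral_add ((h8.add i6).add i4) i2
    _ = (((∫ x, x ^ 8 + (2 * a) * x ^ 6 ∂ρ) + ∫ x, (a ^ 2 + 2 * b) * x ^ 4 ∂ρ)
          + ∫ x, (2 * a * b) * x ^ 2 ∂ρ) + ∫ _x, (b ^ 2 : ℝ) ∂ρ := by
        congr 2; exact integral_add (h8.add i6) i4
    _ = ((((∫ x, x ^ 8 ∂ρ) + ∫ x, (2 * a) * x ^ 6 ∂ρ) + ∫ x, (a ^ 2 + 2 * b) * x ^ 4 ∂ρ)
          + ∫ x, (2 * a * b) * x ^ 2 ∂ρ) + ∫ _x, (b ^ 2 : ℝ) ∂ρ := by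
        congr 3; exact integral_add h8 i6
    _ = (∫ x, x ^ 8 ∂ρ) + 2 * a * (∫ x, x ^ 6 ∂ρ) + (a ^ 2 + 2 * b) * (∫ x, x ^ 4 ∂ρ)
        + 2 * a * b * (∫ x, x ^ 2 ∂ρ) + b ^ 2 := by
        rw [integral_const_mul, integral_const_mul, integral_const_mul, integral_const]
        simp [measure_univ]

lemma int_quad_sq (ρ : Measure ℝ) [IsProbabilityMeasure ρ]
    (h2 : Integrable (fun x : ℝ => x ^ 2) ρ)
    (h4 : Integrable (fun x : ℝ => x ^ 4) ρ) (a : ℝ) :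
    ∫ x, (x ^ 2 - a) ^ 2 ∂ρ =
      (∫ x, x ^ 4 ∂ρ) - 2 * a * (∫ x, x ^ 2 ∂ρ) + a ^ 2 := by
  have i2 := h2.const_mul (-(2 * a))
  have e : (fun x : ℝ => (x ^ 2 - a) ^ 2)
      = fun x : ℝ => (x ^ 4 + (-(2 * a)) * x ^ 2) + a ^ 2 := by
    funext x; ring
  calc ∫ x, (x ^ 2 - a) ^ 2 ∂ρ
      = ∫ x, (x ^ 4 + (-(2 * a)) * x ^ 2) + a ^ 2 ∂ρ := by rw [e]
    _ = (∫ x, x ^ 4 + (-(2 * a)) * x ^ 2 ∂ρ) + ∫ _x, (a ^ 2 : ℝ) ∂ρ :=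
        integral_add (h4.add i2) (integrable_const _)
    _ = ((∫ x, x ^ 4 ∂ρ) + ∫ x, (-(2 * a)) * x ^ 2 ∂ρ) + ∫ _x, (a ^ 2 : ℝ) ∂ρ := by
        congr 1; exact integral_add h4 i2
    _ = (∫ x, x ^ 4 ∂ρ) - 2 * a * (∫ x, x ^ 2 ∂ρ) + a ^ 2 := by
        rw [integral_const_mul, integral_const]
        simp [measure_univ]; ring

lemma card_le_four {t c : ℝ} {s : Finset ℝ}
    (h : ∀ x ∈ s, x ^ 4 + t * x ^ 2 + c = 0) : s.card ≤ 4 := by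
  classical
  set p : Polynomial ℝ := Polynomial.X ^ 4 + Polynomial.C t * Polynomial.X ^ 2 + Polynomial.C c
    with hp
  have hdeg : p.natDegree = 4 := by
    rw [hp]; compute_degree!
  have hp0 : p ≠ 0 := fun h0 => by simp [h0] at hdeg
  have hsub : s.val ⊆ p.roots := by
    intro x hx
    rw [Polynomial.mem_roots hp0]
    have := h x (by exact_mod_cast hx)
    simp [hp, Polynomial.IsRoot, this]
  calc s.card ≤ p.natDegree := Polynomial.card_le_degree_of_subset_roots hsub
    _ = 4 := hdeg

lemma card_le_two {c : ℝ} {s : Finset ℝ}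
    (h : ∀ x ∈ s, x ^ 2 - c = 0) : s.card ≤ 2 := by
  classical
  set p : Polynomial ℝ := Polynomial.X ^ 2 - Polynomial.C c with hp
  have hdeg : p.natDegree = 2 := by
    rw [hp]; compute_degree!
  have hp0 : p ≠ 0 := fun h0 => by simp [h0] at hdeg
  have hsub : s.val ⊆ p.roots := by
    intro x hx
    rw [Polynomial.mem_roots hp0]
    have := h x (by exact_mod_cast hx)
    simp [hp, Polynomial.IsRoot, this]
  calc s.card ≤ p.natDegree := Polynomial.card_le_degree_of_subset_roots hsub
    _ = 2 := hdeg

theorem covariance_matrix_invertible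
    (ρ : Measure ℝ) [IsProbabilityMeasure ρ]
    (hsymm : Measure.map (fun x : ℝ => -x) ρ = ρ)
    (hsupp : ∃ s : Finset ℝ, s.card = 5 ∧ ↑s ⊆ measSupport ρ)
    (h2 : Integrable (fun x : ℝ => x ^ 2) ρ)
    (h4 : Integrable (fun x : ℝ => x ^ 4) ρ)
    (h6 : Integrable (fun x : ℝ => x ^ 6) ρ)
    (h8 : Integrable (fun x : ℝ => x ^ 8) ρ)
    (σ2 μ4 μ6 μ8 : ℝ)
    (hσ2 : σ2 = ∫ x, x ^ 2 ∂ρ) (hμ4 : μ4 = ∫ x, x ^ 4 ∂ρ)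
    (hμ6 : μ6 = ∫ x, x ^ 6 ∂ρ) (hμ8 : μ8 = ∫ x, x ^ 8 ∂ρ) :
    (μ4 - σ2 ^ 2) * (μ8 - μ4 ^ 2) ≠ (μ6 - σ2 * μ4) ^ 2 := by
  intro heq
  obtain ⟨s, hcard, hs⟩ := hsupp
  have hv : μ4 - σ2 ^ 2 = ∫ x, (x ^ 2 - σ2) ^ 2 ∂ρ := by
    rw [int_quad_sq ρ h2 h4 σ2, ← hσ2, ← hμ4]; ring
  have hv0 : 0 ≤ μ4 - σ2 ^ 2 := hv ▸ integral_nonneg (fun x => sq_nonneg _)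
  have hintq : Integrable (fun x : ℝ => (x ^ 2 - σ2) ^ 2) ρ := by
    have e : (fun x : ℝ => (x ^ 2 - σ2) ^ 2)
        = fun x : ℝ => (x ^ 4 + (-(2 * σ2)) * x ^ 2) + σ2 ^ 2 := by funext x; ring
    rw [e]; exact (h4.add (h2.const_mul _)).add (integrable_const _)
  have hvpos : 0 < μ4 - σ2 ^ 2 := by
    rcases hv0.lt_or_eq with h | h
    · exact h
    · exfalso
      have hz : ∫ x, (x ^ 2 - σ2) ^ 2 ∂ρ = 0 := by rw [← hv, ← h]
      have hvan := vanish_on_support ρ (g := fun x => (x ^ 2 - σ2) ^ 2)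
        (((continuous_pow 2).sub continuous_const).pow 2) (fun x => sq_nonneg _) hintq hz
      have : s.card ≤ 2 := card_le_two (fun x hx => by
        have := hvan x (hs hx)
        exact pow_eq_zero_iff (two_ne_zero) |>.mp this)
      omega
  set t : ℝ := -(μ6 - σ2 * μ4) / (μ4 - σ2 ^ 2) with ht
  set c : ℝ := -(μ4 + t * σ2) with hc
  have hvne : μ4 - σ2 ^ 2 ≠ 0 := hvpos.ne'
  have hzero : ∫ x, (x ^ 4 + t * x ^ 2 + c) ^ 2 ∂ρ = 0 := by
    rw [int_quartic_sq ρ h2 h4 h6 h8 t c, ← hσ2, ← hμ4, ← hμ6, ← hμ8]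
    have hCov : μ6 - σ2 * μ4 = -(t * (μ4 - σ2 ^ 2)) := by
      rw [ht]; field_simp
    have key : μ8 - μ4 ^ 2 = t ^ 2 * (μ4 - σ2 ^ 2) := by
      refine mul_left_cancel₀ hvne ?_
      calc (μ4 - σ2 ^ 2) * (μ8 - μ4 ^ 2) = (μ6 - σ2 * μ4) ^ 2 := heq
        _ = (μ4 - σ2 ^ 2) * (t ^ 2 * (μ4 - σ2 ^ 2)) := by rw [hCov]; ring
    rw [hc]
    linear_combination key + 2 * t * hCov
  have hintg : Integrable (fun x : ℝ => (x ^ 4 + t * x ^ 2 + c) ^ 2) ρ := by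
    have e : (fun x : ℝ => (x ^ 4 + t * x ^ 2 + c) ^ 2)
        = fun x : ℝ => (((x ^ 8 + (2 * t) * x ^ 6) + (t ^ 2 + 2 * c) * x ^ 4)
            + (2 * t * c) * x ^ 2) + c ^ 2 := by funext x; ring
    rw [e]
    exact (((h8.add (h6.const_mul _)).add (h4.const_mul _)).add (h2.const_mul _)).add
      (integrable_const _)
  have hvan := vanish_on_support ρ (g := fun x => (x ^ 4 + t * x ^ 2 + c) ^ 2)
    ((((continuous_pow 4).add (continuous_const.mul (continuous_pow 2))).add
      continuous_const).pow 2) (fun x => sq_nonneg _) hintg hzero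
  have : s.card ≤ 4 := card_le_four (fun x hx => by
    have := hvan x (hs hx)
    exact pow_eq_zero_iff (two_ne_zero) |>.mp this)
  omega
end

section
/- Let A > 0, let q be a positive definite quadratic form on ℝ^2, and let (α, β, γ) ∈ ℕ^3 satisfy α/3 + β + γ > 2. Then x^α y^β z^γ / (A x^6 + q(y, z)) tends to 0 as (x, y, z) → (0, 0, 0) along (x,y,z) ≠ (0,0,0). -/
open Filter

private lemma quad_lower (a b c : ℝ) (ha : 0 < a) (hdet : 0 < a * c - b ^ 2) :
    ∃ m : ℝ, 0 < m ∧ ∀ y z : ℝ, m * (y ^ 2 + z ^ 2) ≤ a * y ^ 2 + 2 * b * y * z + c * z ^ 2 := by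
  have hc : 0 < c := by nlinarith [sq_nonneg b]
  have hac : 0 < a + c := by linarith
  refine ⟨(a * c - b ^ 2) / (a + c), div_pos hdet hac, fun y z => ?_⟩
  set m := (a * c - b ^ 2) / (a + c) with hm
  have hmac : m * (a + c) = a * c - b ^ 2 := by rw [hm, div_mul_cancel₀ _ hac.ne']
  have ham : 0 < a - m := by nlinarith [sq_nonneg a, sq_nonneg b]
  nlinarith [sq_nonneg ((a - m) * y + b * z), sq_nonneg (m * z), ham, hmac,
    mul_pos ham (mul_pos ham ham)]

set_option maxHeartbeats 1000000 in
theorem monomial_negligible (A : ℝ) (hA : 0 < A) (q : ℝ → ℝ → ℝ) (a b c : ℝ)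
    (hq : ∀ y z, q y z = a * y ^ 2 + 2 * b * y * z + c * z ^ 2)
    (ha : 0 < a) (hdet : 0 < a * c - b ^ 2)
    (α β γ : ℕ) (hexp : (α : ℚ) / 3 + β + γ > 2) :
    Tendsto (fun p : ℝ × ℝ × ℝ =>
        p.1 ^ α * p.2.1 ^ β * p.2.2 ^ γ / (A * p.1 ^ 6 + q p.2.1 p.2.2))
      (nhdsWithin ((0, 0, 0) : ℝ × ℝ × ℝ) {p | p ≠ (0, 0, 0)}) (nhds 0) := by
  obtain ⟨m, hm, hqm⟩ := quad_lower a b c ha hdet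
  set s : ℝ := (α : ℝ) / 6 + (β : ℝ) / 2 + (γ : ℝ) / 2 with hs_def
  have hexp' : (2:ℝ) < (α : ℝ) / 3 + β + γ := by
    have h := (Rat.cast_lt (K := ℝ)).mpr hexp
    push_cast at h
    linarith
  have hs1 : 1 < s := by rw [hs_def]; linarith
  set D : ℝ × ℝ × ℝ → ℝ := fun p => A * p.1 ^ 6 + m * (p.2.1 ^ 2 + p.2.2 ^ 2) with hD_def
  set C : ℝ := A⁻¹ ^ ((α : ℝ) / 6) * m⁻¹ ^ ((β : ℝ) / 2) * m⁻¹ ^ ((γ : ℝ) / 2) with hC_def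
  -- tendsto of the majorant
  have hDc : Continuous D := by fun_prop
  have hDt : Tendsto D (nhdsWithin ((0, 0, 0) : ℝ × ℝ × ℝ) {p | p ≠ (0, 0, 0)}) (nhds 0) := by
    refine (hDc.tendsto' _ _ ?_).mono_left nhdsWithin_le_nhds
    simp [hD_def]
  have hrc : ContinuousAt (fun t : ℝ => t ^ (s - 1)) 0 :=
    Real.continuousAt_rpow_const 0 (s - 1) (Or.inr (by linarith))
  have hgt : Tendsto (fun p => C * (D p) ^ (s - 1))
      (nhdsWithin ((0, 0, 0) : ℝ × ℝ × ℝ) {p | p ≠ (0, 0, 0)}) (nhds 0) := by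
    have := (hrc.tendsto.comp hDt).const_mul C
    simpa [Real.zero_rpow (by linarith : s - 1 ≠ 0)] using this
  refine squeeze_zero_norm' ?_ hgt
  refine Filter.eventually_of_mem self_mem_nhdsWithin ?_
  rintro ⟨x, y, z⟩ hp
  simp only [Set.mem_setOf_eq, ne_eq, Prod.mk.injEq, not_and] at hp
  -- positivity of D at p
  have hDnn : 0 ≤ m * (y ^ 2 + z ^ 2) := by positivity
  have hD0 : 0 < D (x, y, z) := by
    by_cases hx : x = 0
    · subst hx
      have hyz : y ≠ 0 ∨ z ≠ 0 := by
        by_contra h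
        push_neg at h
        exact hp rfl h.1 h.2
      have : 0 < y ^ 2 + z ^ 2 := by
        rcases hyz with h | h
        · have : 0 < y ^ 2 := by positivity
          nlinarith [sq_nonneg z]
        · have : 0 < z ^ 2 := by positivity
          nlinarith [sq_nonneg y]
      have := mul_pos hm this
      simp only [hD_def]
      nlinarith [sq_nonneg (0:ℝ)]
    · have hx6 : 0 < x ^ 6 := by positivity
      have := mul_pos hA hx6
      simp only [hD_def]
      nlinarith
  have hdenom : D (x, y, z) ≤ A * x ^ 6 + q y z := by
    simp only [hD_def]
    have := hqm y z
    rw [hq]; linarith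
  have hdenom0 : 0 < A * x ^ 6 + q y z := lt_of_lt_of_le hD0 hdenom
  set Dv : ℝ := D (x, y, z) with hDv
  -- bound on |x|^α etc.
  have hxb : |x| ^ α ≤ (Dv / A) ^ ((α : ℝ) / 6) := by
    have h6 : |x| ^ (6 : ℕ) = x ^ 6 := by
      rw [← abs_pow]
      exact abs_of_nonneg (by positivity)
    have hle : x ^ 6 ≤ Dv / A := by
      rw [le_div_iff₀ hA]
      simp only [hDv, hD_def]
      nlinarith
    calc |x| ^ α = ((|x| ^ (6 : ℕ)) : ℝ) ^ ((α : ℝ) / 6) := by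
          rw [← Real.rpow_natCast (|x|) 6, ← Real.rpow_natCast (|x|) α,
            ← Real.rpow_mul (abs_nonneg x)]
          congr 1
          ring
      _ ≤ (Dv / A) ^ ((α : ℝ) / 6) := by
          apply Real.rpow_le_rpow (by positivity) (h6 ▸ hle) (by positivity)
  have hyb : |y| ^ β ≤ (Dv / m) ^ ((β : ℝ) / 2) := by
    have h2 : |y| ^ (2 : ℕ) = y ^ 2 := sq_abs y
    have hle : y ^ 2 ≤ Dv / m := by
      rw [le_div_iff₀ hm]
      simp only [hDv, hD_def]
      have hx6 : (0:ℝ) ≤ A * x ^ 6 := by positivity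
      nlinarith [sq_nonneg z]
    calc |y| ^ β = ((|y| ^ (2 : ℕ)) : ℝ) ^ ((β : ℝ) / 2) := by
          rw [← Real.rpow_natCast (|y|) 2, ← Real.rpow_natCast (|y|) β,
            ← Real.rpow_mul (abs_nonneg y)]
          congr 1
          ring
      _ ≤ (Dv / m) ^ ((β : ℝ) / 2) := by
          apply Real.rpow_le_rpow (by positivity) (h2 ▸ hle) (by positivity)
  have hzb : |z| ^ γ ≤ (Dv / m) ^ ((γ : ℝ) / 2) := by
    have h2 : |z| ^ (2 : ℕ) = z ^ 2 := sq_abs z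
    have hle : z ^ 2 ≤ Dv / m := by
      rw [le_div_iff₀ hm]
      simp only [hDv, hD_def]
      have hx6 : (0:ℝ) ≤ A * x ^ 6 := by positivity
      nlinarith [sq_nonneg y]
    calc |z| ^ γ = ((|z| ^ (2 : ℕ)) : ℝ) ^ ((γ : ℝ) / 2) := by
          rw [← Real.rpow_natCast (|z|) 2, ← Real.rpow_natCast (|z|) γ,
            ← Real.rpow_mul (abs_nonneg z)]
          congr 1
          ring
      _ ≤ (Dv / m) ^ ((γ : ℝ) / 2) := by
          apply Real.rpow_le_rpow (by positivity) (h2 ▸ hle) (by positivity)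
  have hnum : |x ^ α * y ^ β * z ^ γ| ≤ C * Dv ^ s := by
    have h1 : |x ^ α * y ^ β * z ^ γ| = |x| ^ α * |y| ^ β * |z| ^ γ := by
      rw [abs_mul, abs_mul, abs_pow, abs_pow, abs_pow]
    rw [h1]
    have h2 : |x| ^ α * |y| ^ β * |z| ^ γ ≤
        (Dv / A) ^ ((α : ℝ) / 6) * (Dv / m) ^ ((β : ℝ) / 2) * (Dv / m) ^ ((γ : ℝ) / 2) := by
      have p1 : (0:ℝ) ≤ |x| ^ α := by positivity
      have p2 : (0:ℝ) ≤ |y| ^ β := by positivity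
      have p3 : (0:ℝ) ≤ |z| ^ γ := by positivity
      have q1 : (0:ℝ) ≤ (Dv / A) ^ ((α : ℝ) / 6) := Real.rpow_nonneg (by positivity) _
      have q2 : (0:ℝ) ≤ (Dv / m) ^ ((β : ℝ) / 2) := Real.rpow_nonneg (by positivity) _
      exact mul_le_mul (mul_le_mul hxb hyb p2 q1) hzb p3 (mul_nonneg q1 q2)
    refine h2.trans_eq ?_
    have e1 : (Dv / A) ^ ((α : ℝ) / 6) = Dv ^ ((α : ℝ) / 6) * A⁻¹ ^ ((α : ℝ) / 6) := by
      rw [div_eq_mul_inv Dv A, Real.mul_rpow hD0.le (inv_nonneg.mpr hA.le)]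
    have e2 : (Dv / m) ^ ((β : ℝ) / 2) = Dv ^ ((β : ℝ) / 2) * m⁻¹ ^ ((β : ℝ) / 2) := by
      rw [div_eq_mul_inv Dv m, Real.mul_rpow hD0.le (inv_nonneg.mpr hm.le)]
    have e3 : (Dv / m) ^ ((γ : ℝ) / 2) = Dv ^ ((γ : ℝ) / 2) * m⁻¹ ^ ((γ : ℝ) / 2) := by
      rw [div_eq_mul_inv Dv m, Real.mul_rpow hD0.le (inv_nonneg.mpr hm.le)]
    rw [e1, e2, e3, hC_def, hs_def, Real.rpow_add hD0, Real.rpow_add hD0]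
    ring
  -- final bound
  have key : ‖x ^ α * y ^ β * z ^ γ / (A * x ^ 6 + q y z)‖ ≤ C * Dv ^ (s - 1) := by
    rw [Real.norm_eq_abs, abs_div, abs_of_pos hdenom0]
    calc |x ^ α * y ^ β * z ^ γ| / (A * x ^ 6 + q y z)
        ≤ (C * Dv ^ s) / Dv := by
          apply div_le_div₀ (by positivity) hnum hD0 hdenom
      _ = C * Dv ^ (s - 1) := by
          have e : Dv ^ s / Dv = Dv ^ (s - 1) := by
            rw [Real.rpow_sub hD0, Real.rpow_one]
          rw [mul_div_assoc, e]
  exact key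
end

section
/- Let f : ℝ → [0, ∞) be a bounded measurable function with ∫ f = 1 (a probability density). Then for every p with 1 < p < 5/4, the integral over ℝ^3 of f(x)^p f(y)^p f(z)^p / |(x+y+z)(x−y)(y−z)(z−x)|^{p−1} dx dy dz is finite. -/
open MeasureTheory Set Real
open scoped ENNReal NNReal

-- integrability of the truncated kernel
lemma hInt {α : ℝ} (hα0 : 0 < α) (hα1 : α < 1) :
    Integrable (fun u : ℝ => if |u| ≤ 1 then |u| ^ (-α) else 0) := by
  have hioi : IntegrableOn (fun u : ℝ => if |u| ≤ 1 then |u| ^ (-α) else 0) (Ioi 0) := by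
    have h01 : IntegrableOn (fun u : ℝ => u ^ (-α)) (Ioc 0 1) := by
      have := intervalIntegral.intervalIntegrable_rpow' (a := 0) (b := 1) (r := -α) (by linarith)
      rwa [intervalIntegrable_iff_integrableOn_Ioc_of_le zero_le_one] at this
    have h1 : IntegrableOn (fun u : ℝ => if |u| ≤ 1 then |u| ^ (-α) else 0) (Ioc 0 1) := by
      refine h01.congr_fun (fun u hu => ?_) measurableSet_Ioc
      rw [abs_of_pos hu.1, if_pos hu.2]
    have h2 : IntegrableOn (fun u : ℝ => if |u| ≤ 1 then |u| ^ (-α) else 0) (Ioi 1) := by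
      refine (integrableOn_zero (s := Ioi (1:ℝ))).congr_fun (fun u hu => ?_) measurableSet_Ioi
      rw [if_neg]
      rw [abs_of_pos (by linarith [mem_Ioi.mp hu])]
      exact not_le.mpr hu
    have := h1.union h2
    refine this.mono ?_ le_rfl
    intro u hu
    rcases le_or_gt u 1 with h | h
    · exact Or.inl ⟨hu, h⟩
    · exact Or.inr h
  have hiic : IntegrableOn (fun u : ℝ => if |u| ≤ 1 then |u| ^ (-α) else 0) (Iic 0) := by
    rw [← Measure.map_neg_eq_self (volume : Measure ℝ)]
    have m : MeasurableEmbedding fun x : ℝ => -x := (Homeomorph.neg ℝ).measurableEmbedding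
    rw [m.integrableOn_map_iff]
    simp_rw [Function.comp_def, abs_neg, neg_preimage, neg_Iic, neg_zero]
    exact (integrableOn_Ici_iff_integrableOn_Ioi).mpr hioi
  have := hiic.union hioi
  rw [Iic_union_Ioi] at this
  rwa [← integrableOn_univ]

lemma kernel_bound {g : ℝ → ℝ} (hg : Measurable g) (hg0 : ∀ x, 0 ≤ g x)
    {C : ℝ} (hC : ∀ x, g x ≤ C) {α : ℝ} (hα0 : 0 < α) (hα1 : α < 1)
    (hgi : (∫⁻ x, ENNReal.ofReal (g x)) ≠ ⊤) :
    ∃ K : ℝ≥0∞, K ≠ ⊤ ∧ ∀ t : ℝ,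
      (∫⁻ y, ENNReal.ofReal (g y / |t - y| ^ α)) ≤ K := by
  classical
  set h : ℝ → ℝ := fun u => if |u| ≤ 1 then |u| ^ (-α) else 0 with hh
  have hC0 : 0 ≤ C := le_trans (hg0 0) (hC 0)
  have hhmeas : Measurable h := by
    refine Measurable.ite ?_ ((measurable_abs).pow_const _) measurable_const
    exact measurableSet_le measurable_abs measurable_const
  have hint : Integrable h := hInt hα0 hα1
  set J : ℝ≥0∞ := ∫⁻ u, ENNReal.ofReal (h u) with hJ
  have hJfin : J ≠ ⊤ := by
    have : J ≤ ∫⁻ u, ‖h u‖ₑ := lintegral_mono fun u => Real.ofReal_le_enorm _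
    exact (lt_of_le_of_lt this hint.hasFiniteIntegral).ne
  refine ⟨ENNReal.ofReal C * J + ∫⁻ x, ENNReal.ofReal (g x), by
    simp [ENNReal.add_ne_top, ENNReal.mul_ne_top, hJfin, hgi], fun t => ?_⟩
  have hptwise : ∀ y, ENNReal.ofReal (g y / |t - y| ^ α)
      ≤ ENNReal.ofReal (C * h (t - y)) + ENNReal.ofReal (g y) := by
    intro y
    refine le_trans (ENNReal.ofReal_le_ofReal ?_) (ENNReal.ofReal_add_le)
    by_cases hb : |t - y| ≤ 1
    · have : h (t - y) = |t - y| ^ (-α) := if_pos hb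
      rw [this, Real.rpow_neg (abs_nonneg _)]
      have h1 : g y / |t - y| ^ α ≤ C * (|t - y| ^ α)⁻¹ := by
        rw [div_eq_mul_inv]
        exact mul_le_mul_of_nonneg_right (hC y) (inv_nonneg.mpr (Real.rpow_nonneg (abs_nonneg _) _))
      linarith [hg0 y]
    · have : h (t - y) = 0 := if_neg hb
      rw [this, mul_zero, zero_add]
      have hb1 : (1:ℝ) ≤ |t - y| ^ α := Real.one_le_rpow (not_le.mp hb).le hα0.le
      exact div_le_self (hg0 y) hb1
  calc ∫⁻ y, ENNReal.ofReal (g y / |t - y| ^ α)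
      ≤ ∫⁻ y, (ENNReal.ofReal (C * h (t - y)) + ENNReal.ofReal (g y)) :=
        lintegral_mono hptwise
    _ = (∫⁻ y, ENNReal.ofReal (C * h (t - y))) + ∫⁻ y, ENNReal.ofReal (g y) :=
        lintegral_add_right _ hg.ennreal_ofReal
    _ = ENNReal.ofReal C * J + ∫⁻ x, ENNReal.ofReal (g x) := by
        congr 1
        have : ∀ y : ℝ, ENNReal.ofReal (C * h (t - y))
            = ENNReal.ofReal C * ENNReal.ofReal (h (t - y)) := fun y =>
          ENNReal.ofReal_mul hC0
        simp_rw [this]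
        rw [lintegral_const_mul' _ _ ENNReal.ofReal_ne_top]
        congr 1
        exact (Measure.measurePreserving_sub_left volume t).lintegral_comp hhmeas.ennreal_ofReal

lemma triple_finite_z {g : ℝ → ℝ} (hg : Measurable g) (hg0 : ∀ x, 0 ≤ g x)
    (hgi : (∫⁻ x, ENNReal.ofReal (g x)) ≠ ⊤)
    {α : ℝ} {t : ℝ → ℝ → ℝ} (ht : Measurable fun q : ℝ × ℝ => t q.1 q.2)
    {K : ℝ≥0∞} (hK : K ≠ ⊤)
    (hker : ∀ s : ℝ, (∫⁻ z, ENNReal.ofReal (g z / |s - z| ^ α)) ≤ K) :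
    (∫⁻ q : ℝ × ℝ × ℝ,
      ENNReal.ofReal (g q.1 * g q.2.1 * (g q.2.2 / |t q.1 q.2.1 - q.2.2| ^ α))) < ⊤ := by
  have hFmeas : Measurable fun q : ℝ × ℝ × ℝ =>
      ENNReal.ofReal (g q.1 * g q.2.1 * (g q.2.2 / |t q.1 q.2.1 - q.2.2| ^ α)) := by
    apply Measurable.ennreal_ofReal
    apply Measurable.mul
    · exact ((hg.comp measurable_fst).mul (hg.comp (measurable_fst.comp measurable_snd)))
    · apply Measurable.div
      · exact hg.comp (measurable_snd.comp measurable_snd)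
      · exact ((ht.comp ((measurable_fst).prodMk
          (measurable_fst.comp measurable_snd))).sub
          (measurable_snd.comp measurable_snd)).abs.pow_const _
  set A : ℝ≥0∞ := ∫⁻ x, ENNReal.ofReal (g x) with hA
  have key : (∫⁻ q : ℝ × ℝ × ℝ,
      ENNReal.ofReal (g q.1 * g q.2.1 * (g q.2.2 / |t q.1 q.2.1 - q.2.2| ^ α)))
      ≤ A * (A * K) := by
    rw [Measure.volume_eq_prod, lintegral_prod _ hFmeas.aemeasurable]
    have inner : ∀ x : ℝ, (∫⁻ yz : ℝ × ℝ,
        ENNReal.ofReal (g x * g yz.1 * (g yz.2 / |t x yz.1 - yz.2| ^ α)))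
        ≤ ENNReal.ofReal (g x) * (A * K) := by
      intro x
      rw [Measure.volume_eq_prod, lintegral_prod]
      swap
      · exact (hFmeas.comp (measurable_const.prodMk measurable_id)).aemeasurable
      have inner2 : ∀ y : ℝ, (∫⁻ z : ℝ,
          ENNReal.ofReal (g x * g y * (g z / |t x y - z| ^ α)))
          ≤ ENNReal.ofReal (g x) * ENNReal.ofReal (g y) * K := by
        intro y
        have : ∀ z : ℝ, ENNReal.ofReal (g x * g y * (g z / |t x y - z| ^ α))
            = ENNReal.ofReal (g x) * ENNReal.ofReal (g y)
              * ENNReal.ofReal (g z / |t x y - z| ^ α) := by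
          intro z
          rw [ENNReal.ofReal_mul (mul_nonneg (hg0 x) (hg0 y)),
            ENNReal.ofReal_mul (hg0 x)]
        simp_rw [this]
        rw [lintegral_const_mul' _ _
          (ENNReal.mul_ne_top ENNReal.ofReal_ne_top ENNReal.ofReal_ne_top)]
        exact mul_le_mul_right (hker (t x y)) _
      calc (∫⁻ y, ∫⁻ z, ENNReal.ofReal (g x * g y * (g z / |t x y - z| ^ α)))
          ≤ ∫⁻ y, ENNReal.ofReal (g x) * ENNReal.ofReal (g y) * K :=
            lintegral_mono inner2
        _ = ∫⁻ y, (ENNReal.ofReal (g x) * K) * ENNReal.ofReal (g y) := by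
            congr 1; funext y; ring
        _ = (ENNReal.ofReal (g x) * K) * A := by
            rw [lintegral_const_mul' _ _
              (ENNReal.mul_ne_top ENNReal.ofReal_ne_top hK)]
        _ = ENNReal.ofReal (g x) * (A * K) := by ring
    calc (∫⁻ x, ∫⁻ yz : ℝ × ℝ,
        ENNReal.ofReal (g x * g yz.1 * (g yz.2 / |t x yz.1 - yz.2| ^ α)))
        ≤ ∫⁻ x, ENNReal.ofReal (g x) * (A * K) := lintegral_mono inner
      _ = (∫⁻ x, ENNReal.ofReal (g x)) * (A * K) := by
          rw [lintegral_mul_const' _ _ (ENNReal.mul_ne_top hgi hK)]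
      _ = A * (A * K) := rfl
  exact lt_of_le_of_lt key (ENNReal.mul_lt_top hgi.lt_top
    (ENNReal.mul_lt_top hgi.lt_top hK.lt_top))

lemma triple_finite_y {g : ℝ → ℝ} (hg : Measurable g) (hg0 : ∀ x, 0 ≤ g x)
    (hgi : (∫⁻ x, ENNReal.ofReal (g x)) ≠ ⊤)
    {α : ℝ} {K : ℝ≥0∞} (hK : K ≠ ⊤)
    (hker : ∀ s : ℝ, (∫⁻ z, ENNReal.ofReal (g z / |s - z| ^ α)) ≤ K) :
    (∫⁻ q : ℝ × ℝ × ℝ,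
      ENNReal.ofReal (g q.1 * (g q.2.1 / |q.1 - q.2.1| ^ α) * g q.2.2)) < ⊤ := by
  have hFmeas : Measurable fun q : ℝ × ℝ × ℝ =>
      ENNReal.ofReal (g q.1 * (g q.2.1 / |q.1 - q.2.1| ^ α) * g q.2.2) := by
    apply Measurable.ennreal_ofReal
    refine Measurable.mul (Measurable.mul (hg.comp measurable_fst) ?_)
      (hg.comp (measurable_snd.comp measurable_snd))
    exact (hg.comp (measurable_fst.comp measurable_snd)).div
      ((measurable_fst.sub (measurable_fst.comp measurable_snd)).abs.pow_const _)
  set A : ℝ≥0∞ := ∫⁻ x, ENNReal.ofReal (g x) with hA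
  have key : (∫⁻ q : ℝ × ℝ × ℝ,
      ENNReal.ofReal (g q.1 * (g q.2.1 / |q.1 - q.2.1| ^ α) * g q.2.2))
      ≤ A * (K * A) := by
    rw [Measure.volume_eq_prod, lintegral_prod _ hFmeas.aemeasurable]
    have inner : ∀ x : ℝ, (∫⁻ yz : ℝ × ℝ,
        ENNReal.ofReal (g x * (g yz.1 / |x - yz.1| ^ α) * g yz.2))
        ≤ ENNReal.ofReal (g x) * (K * A) := by
      intro x
      rw [Measure.volume_eq_prod, lintegral_prod]
      swap
      · exact (hFmeas.comp (measurable_const.prodMk measurable_id)).aemeasurable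
      have inner2 : ∀ y : ℝ, (∫⁻ z : ℝ,
          ENNReal.ofReal (g x * (g y / |x - y| ^ α) * g z))
          = ENNReal.ofReal (g x) * ENNReal.ofReal (g y / |x - y| ^ α) * A := by
        intro y
        have : ∀ z : ℝ, ENNReal.ofReal (g x * (g y / |x - y| ^ α) * g z)
            = ENNReal.ofReal (g x) * ENNReal.ofReal (g y / |x - y| ^ α)
              * ENNReal.ofReal (g z) := by
          intro z
          rw [ENNReal.ofReal_mul (mul_nonneg (hg0 x)
            (div_nonneg (hg0 y) (Real.rpow_nonneg (abs_nonneg _) _))),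
            ENNReal.ofReal_mul (hg0 x)]
        simp_rw [this]
        rw [lintegral_const_mul' _ _
          (ENNReal.mul_ne_top ENNReal.ofReal_ne_top ENNReal.ofReal_ne_top)]
      calc (∫⁻ y, ∫⁻ z, ENNReal.ofReal (g x * (g y / |x - y| ^ α) * g z))
          = ∫⁻ y, ENNReal.ofReal (g x) * ENNReal.ofReal (g y / |x - y| ^ α) * A := by
            simp_rw [inner2]
        _ = ∫⁻ y, (ENNReal.ofReal (g x) * A) * ENNReal.ofReal (g y / |x - y| ^ α) := by
            congr 1; funext y; ring
        _ = (ENNReal.ofReal (g x) * A) * ∫⁻ y, ENNReal.ofReal (g y / |x - y| ^ α) := by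
            rw [lintegral_const_mul' _ _
              (ENNReal.mul_ne_top ENNReal.ofReal_ne_top hgi)]
        _ ≤ (ENNReal.ofReal (g x) * A) * K := mul_le_mul_right (hker x) _
        _ = ENNReal.ofReal (g x) * (K * A) := by ring
    calc (∫⁻ x, ∫⁻ yz : ℝ × ℝ,
        ENNReal.ofReal (g x * (g yz.1 / |x - yz.1| ^ α) * g yz.2))
        ≤ ∫⁻ x, ENNReal.ofReal (g x) * (K * A) := lintegral_mono inner
      _ = A * (K * A) := by
          rw [lintegral_mul_const' _ _ (ENNReal.mul_ne_top hK hgi)]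
  exact lt_of_le_of_lt key (ENNReal.mul_lt_top hgi.lt_top
    (ENNReal.mul_lt_top hK.lt_top hgi.lt_top))

lemma amgm4 {a b c d : ℝ} (ha : 0 ≤ a) (hb : 0 ≤ b) (hc : 0 ≤ c) (hd : 0 ≤ d) :
    a * b * c * d ≤ a ^ (4:ℕ) + b ^ (4:ℕ) + c ^ (4:ℕ) + d ^ (4:ℕ) := by
  nlinarith [sq_nonneg (a*b - c*d), sq_nonneg (a^2 - b^2), sq_nonneg (c^2 - d^2),
    sq_nonneg (a - b), sq_nonneg (c - d), mul_nonneg ha hb, mul_nonneg hc hd,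
    mul_nonneg (mul_nonneg ha hb) (mul_nonneg hc hd), sq_nonneg (a*b + c*d),
    sq_nonneg (a + b), sq_nonneg (c + d)]

lemma amgm_div {N a b c d β : ℝ} (hN : 0 ≤ N) (hβ : 0 < β) :
    N / |a * b * c * d| ^ β ≤
      N / |a| ^ (4 * β) + N / |b| ^ (4 * β) + N / |c| ^ (4 * β) + N / |d| ^ (4 * β) := by
  have h4 : ∀ x : ℝ, (|x| ^ (-β)) ^ (4:ℕ) = (|x| ^ (4 * β))⁻¹ := by
    intro x
    rw [← Real.rpow_natCast (|x| ^ (-β)) 4, ← Real.rpow_mul (abs_nonneg x),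
      ← Real.rpow_neg (abs_nonneg x)]
    norm_num
    ring_nf
  have habs : |a * b * c * d| = |a| * |b| * |c| * |d| := by
    rw [abs_mul, abs_mul, abs_mul]
  have hsplit : N / |a * b * c * d| ^ β
      = N * ((|a| ^ (-β)) * (|b| ^ (-β)) * (|c| ^ (-β)) * (|d| ^ (-β))) := by
    rw [habs, Real.mul_rpow (by positivity) (abs_nonneg d),
      Real.mul_rpow (by positivity) (abs_nonneg c),
      Real.mul_rpow (abs_nonneg a) (abs_nonneg b)]
    rw [Real.rpow_neg (abs_nonneg a), Real.rpow_neg (abs_nonneg b),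
      Real.rpow_neg (abs_nonneg c), Real.rpow_neg (abs_nonneg d)]
    rw [div_eq_mul_inv]
    ring
  rw [hsplit]
  have key := amgm4 (Real.rpow_nonneg (abs_nonneg a) (-β))
    (Real.rpow_nonneg (abs_nonneg b) (-β)) (Real.rpow_nonneg (abs_nonneg c) (-β))
    (Real.rpow_nonneg (abs_nonneg d) (-β))
  calc N * ((|a| ^ (-β)) * (|b| ^ (-β)) * (|c| ^ (-β)) * (|d| ^ (-β)))
      ≤ N * ((|a| ^ (-β)) ^ (4:ℕ) + (|b| ^ (-β)) ^ (4:ℕ) + (|c| ^ (-β)) ^ (4:ℕ)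
        + (|d| ^ (-β)) ^ (4:ℕ)) := mul_le_mul_of_nonneg_left key hN
    _ = N / |a| ^ (4 * β) + N / |b| ^ (4 * β) + N / |c| ^ (4 * β) + N / |d| ^ (4 * β) := by
        rw [h4 a, h4 b, h4 c, h4 d, div_eq_mul_inv, div_eq_mul_inv, div_eq_mul_inv,
          div_eq_mul_inv]
        ring

theorem density_condition_integrable
    (f : ℝ → ℝ) (hf0 : ∀ x, 0 ≤ f x) (hmeas : Measurable f)
    (M : ℝ) (hbd : ∀ x, f x ≤ M)
    (hint : ∫ x, f x = 1)
    (p : ℝ) (hp1 : 1 < p) (hp2 : p < 5 / 4) :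
    Integrable (fun q : ℝ × ℝ × ℝ =>
        f q.1 ^ p * f q.2.1 ^ p * f q.2.2 ^ p /
          |(q.1 + q.2.1 + q.2.2) * (q.1 - q.2.1) * (q.2.1 - q.2.2) * (q.2.2 - q.1)| ^ (p - 1))
      (volume : Measure (ℝ × ℝ × ℝ)) := by
  have hf_int : Integrable f := by
    by_contra h
    rw [integral_undef h] at hint
    norm_num at hint
  have hB1 : (1:ℝ) ≤ max M 1 := le_max_right _ _
  have hfB : ∀ x, f x ≤ max M 1 := fun x => le_trans (hbd x) (le_max_left _ _)
  have hβ0 : (0:ℝ) < p - 1 := by linarith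
  have hα0 : (0:ℝ) < 4 * (p - 1) := by linarith
  have hα1 : 4 * (p - 1) < 1 := by linarith
  have hgmeas : Measurable fun x => f x ^ p := by fun_prop
  have hg0 : ∀ x, 0 ≤ f x ^ p := fun x => Real.rpow_nonneg (hf0 x) p
  have hgC : ∀ x, f x ^ p ≤ (max M 1) ^ p := fun x =>
    Real.rpow_le_rpow (hf0 x) (hfB x) (by linarith)
  have hgf : ∀ x, f x ^ p ≤ (max M 1) ^ (p - 1) * f x := by
    intro x
    rcases eq_or_lt_of_le (hf0 x) with h0 | h0
    · rw [← h0, Real.zero_rpow (by linarith), mul_zero]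
    · have hrw : f x ^ p = f x ^ (p - 1) * f x := by
        nth_rewrite 1 [show p = (p - 1) + 1 by ring]
        rw [Real.rpow_add h0, Real.rpow_one]
      rw [hrw]
      exact mul_le_mul_of_nonneg_right
        (Real.rpow_le_rpow (hf0 x) (hfB x) hβ0.le) (hf0 x)
  have hfi : (∫⁻ x, ENNReal.ofReal (f x)) ≠ ⊤ := by
    refine ((lintegral_mono fun x => Real.ofReal_le_enorm (f x)).trans_lt ?_).ne
    exact hf_int.hasFiniteIntegral
  have hgi : (∫⁻ x, ENNReal.ofReal (f x ^ p)) ≠ ⊤ := by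
    have hle : ∀ x, ENNReal.ofReal (f x ^ p)
        ≤ ENNReal.ofReal ((max M 1) ^ (p - 1)) * ENNReal.ofReal (f x) := fun x => by
      rw [← ENNReal.ofReal_mul (by positivity)]
      exact ENNReal.ofReal_le_ofReal (hgf x)
    have h2 := lintegral_mono (μ := (volume : Measure ℝ)) hle
    rw [lintegral_const_mul' _ _ ENNReal.ofReal_ne_top] at h2
    exact (h2.trans_lt (ENNReal.mul_lt_top ENNReal.ofReal_ne_top.lt_top hfi.lt_top)).ne
  obtain ⟨K, hK, hker⟩ := kernel_bound hgmeas hg0 hgC hα0 hα1 hgi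
  have T1 := triple_finite_z hgmeas hg0 hgi (t := fun x y => -x - y)
    (by fun_prop) hK hker
  have T2 := triple_finite_y hgmeas hg0 hgi hK hker
  have T3 := triple_finite_z hgmeas hg0 hgi (t := fun x y => y)
    (by fun_prop) hK hker
  have T4 := triple_finite_z hgmeas hg0 hgi (t := fun x y => x)
    (by fun_prop) hK hker
  constructor
  · exact Measurable.aestronglyMeasurable (by fun_prop)
  · rw [hasFiniteIntegral_iff_ofReal]
    swap
    · refine Filter.Eventually.of_forall fun q => ?_
      exact div_nonneg (mul_nonneg (mul_nonneg (hg0 q.1) (hg0 q.2.1)) (hg0 q.2.2))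
        (Real.rpow_nonneg (abs_nonneg _) _)
    have hpt : ∀ q : ℝ × ℝ × ℝ,
        ENNReal.ofReal (f q.1 ^ p * f q.2.1 ^ p * f q.2.2 ^ p /
          |(q.1 + q.2.1 + q.2.2) * (q.1 - q.2.1) * (q.2.1 - q.2.2) * (q.2.2 - q.1)| ^ (p - 1))
        ≤ ENNReal.ofReal (f q.1 ^ p * f q.2.1 ^ p * (f q.2.2 ^ p / |(-q.1 - q.2.1) - q.2.2| ^ (4 * (p - 1))))
          + ENNReal.ofReal (f q.1 ^ p * (f q.2.1 ^ p / |q.1 - q.2.1| ^ (4 * (p - 1))) * f q.2.2 ^ p)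
          + ENNReal.ofReal (f q.1 ^ p * f q.2.1 ^ p * (f q.2.2 ^ p / |q.2.1 - q.2.2| ^ (4 * (p - 1))))
          + ENNReal.ofReal (f q.1 ^ p * f q.2.1 ^ p * (f q.2.2 ^ p / |q.1 - q.2.2| ^ (4 * (p - 1)))) := by
      rintro ⟨x, y, z⟩
      dsimp only
      have hN : 0 ≤ f x ^ p * f y ^ p * f z ^ p :=
        mul_nonneg (mul_nonneg (hg0 x) (hg0 y)) (hg0 z)
      have h := amgm_div (N := f x ^ p * f y ^ p * f z ^ p)
        (a := x + y + z) (b := x - y) (c := y - z) (d := z - x) hN hβ0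
      have e1 : f x ^ p * f y ^ p * f z ^ p / |x + y + z| ^ (4 * (p - 1))
          = f x ^ p * f y ^ p * (f z ^ p / |(-x - y) - z| ^ (4 * (p - 1))) := by
        rw [show (-x - y) - z = -(x + y + z) by ring, abs_neg, mul_div_assoc]
      have e2 : f x ^ p * f y ^ p * f z ^ p / |x - y| ^ (4 * (p - 1))
          = f x ^ p * (f y ^ p / |x - y| ^ (4 * (p - 1))) * f z ^ p := by
        rw [div_eq_mul_inv, div_eq_mul_inv]; ring
      have e3 : f x ^ p * f y ^ p * f z ^ p / |y - z| ^ (4 * (p - 1))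
          = f x ^ p * f y ^ p * (f z ^ p / |y - z| ^ (4 * (p - 1))) := mul_div_assoc _ _ _
      have e4 : f x ^ p * f y ^ p * f z ^ p / |z - x| ^ (4 * (p - 1))
          = f x ^ p * f y ^ p * (f z ^ p / |x - z| ^ (4 * (p - 1))) := by
        rw [abs_sub_comm z x, mul_div_assoc]
      rw [e1, e2, e3, e4] at h
      refine le_trans (ENNReal.ofReal_le_ofReal h) ?_
      refine le_trans ENNReal.ofReal_add_le (add_le_add ?_ le_rfl)
      refine le_trans ENNReal.ofReal_add_le (add_le_add ?_ le_rfl)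
      exact ENNReal.ofReal_add_le
    calc (∫⁻ q : ℝ × ℝ × ℝ, ENNReal.ofReal (f q.1 ^ p * f q.2.1 ^ p * f q.2.2 ^ p /
          |(q.1 + q.2.1 + q.2.2) * (q.1 - q.2.1) * (q.2.1 - q.2.2) * (q.2.2 - q.1)| ^ (p - 1)))
        ≤ ∫⁻ q : ℝ × ℝ × ℝ,
          (ENNReal.ofReal (f q.1 ^ p * f q.2.1 ^ p * (f q.2.2 ^ p / |(-q.1 - q.2.1) - q.2.2| ^ (4 * (p - 1))))
          + ENNReal.ofReal (f q.1 ^ p * (f q.2.1 ^ p / |q.1 - q.2.1| ^ (4 * (p - 1))) * f q.2.2 ^ p)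
          + ENNReal.ofReal (f q.1 ^ p * f q.2.1 ^ p * (f q.2.2 ^ p / |q.2.1 - q.2.2| ^ (4 * (p - 1))))
          + ENNReal.ofReal (f q.1 ^ p * f q.2.1 ^ p * (f q.2.2 ^ p / |q.1 - q.2.2| ^ (4 * (p - 1))))) :=
          lintegral_mono hpt
      _ < ⊤ := by
          rw [lintegral_add_left (by fun_prop), lintegral_add_left (by fun_prop),
            lintegral_add_left (by fun_prop)]
          exact ENNReal.add_lt_top.mpr ⟨ENNReal.add_lt_top.mpr
            ⟨ENNReal.add_lt_top.mpr ⟨T1, T2⟩, T3⟩, T4⟩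
end
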